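/- Assume Condition 4: γ is a decreasing function on the closure of (a,b) with 0 < γ(a+) ≤ ∞ and −∞ ≤ γ(b−) < 0, with x₀ := sup{x ∈ (a,b) : γ(x) > 0}; η is positive and locally absolutely continuous on (a,b); γ/η is locally integrable on (a,b) and Q(x) := ∫_{x₀}^x γ(t)/η(t) dt satisfies lim_{x↓a} Q(x) = lim_{x↑b} Q(x) = −∞. Define a probability density p on (a,b) by p(x) = (K/η(x))·exp(Q(x)) with K > 0 the normalizing constant, and let Z have density p. Then E[γ(Z)] = ∫_a^b γ(t)p(t) dt = 0 and η(x) = (1/p(x))·∫_a^x γ(t)p(t) dt for all a < x < b. -/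

import Mathlib

open MeasureTheory Set Filter Topology

noncomputable section

/-- The open interval `(a,b)` with extended-real endpoints, viewed as a set of reals. -/
def ooE (a b : EReal) : Set ℝ := {x : ℝ | a < (x : EReal) ∧ (x : EReal) < b}

/-- The closed interval `[a,b] ∩ ℝ` (the closure of `(a,b)` in `ℝ`). -/
def ccE (a b : EReal) : Set ℝ := {x : ℝ | a ≤ (x : EReal) ∧ (x : EReal) ≤ b}

/-- The filter on `ℝ` of right-neighbourhoods of the (possibly infinite) endpoint `a`:
for finite `a` this is `𝓝[>] a`, for `a = ⊥` it is `atBot`. -/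
def nhdsGT (a : EReal) : Filter ℝ :=
  Filter.comap (fun x : ℝ => (x : EReal)) (nhdsWithin a (Set.Ioi a))

/-- The filter on `ℝ` of left-neighbourhoods of the (possibly infinite) endpoint `b`. -/
def nhdsLT (b : EReal) : Filter ℝ :=
  Filter.comap (fun x : ℝ => (x : EReal)) (nhdsWithin b (Set.Iio b))

/-- `f` is (locally) an indefinite integral of `f'` on `s`. -/
def IsLocACOn (f f' : ℝ → ℝ) (s : Set ℝ) : Prop :=
  ∀ x ∈ s, ∀ y ∈ s, IntervalIntegrable f' volume x y ∧ f y - f x = ∫ t in x..y, f' t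

/-- `f` is locally absolutely continuous on `s`. -/
def LocACOn (f : ℝ → ℝ) (s : Set ℝ) : Prop := ∃ f', IsLocACOn f f' s

/-- Condition 1: `p` is a probability density which is positive and locally absolutely
continuous on `(a,b)` and vanishes outside of `(a,b)`. -/
structure Cond1 (a b : EReal) (p : ℝ → ℝ) : Prop where
  lt : a < b
  meas : Measurable p
  nonneg : ∀ x, 0 ≤ p x
  pos : ∀ x ∈ ooE a b, 0 < p x
  zero : ∀ x, x ∉ ooE a b → p x = 0
  integrable : MeasureTheory.Integrable p
  total : ∫ x, p x = 1
  locAC : LocACOn p (ooE a b)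

/-- Condition 2: `γ` is Borel measurable, not identically zero, decreasing on `[a,b]`,
with `E|γ(Z)| < ∞` and `E[γ(Z)] = 0`. -/
structure Cond2 (a b : EReal) (p γ : ℝ → ℝ) : Prop where
  meas : Measurable γ
  ne_zero : ∃ x ∈ ccE a b, γ x ≠ 0
  anti : AntitoneOn γ (ccE a b)
  integrable : MeasureTheory.Integrable (fun x => γ x * p x)
  mean_zero : ∫ x, γ x * p x = 0

/-- `I(x) = ∫_a^x γ(t) p(t) dt` (the density vanishes outside `(a,b)`). -/
def Ifun (γ p : ℝ → ℝ) (x : ℝ) : ℝ := ∫ t in Iic x, γ t * p t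

/-- The distribution function `F` of the density `p`. -/
def Ffun (p : ℝ → ℝ) (x : ℝ) : ℝ := ∫ t in Iic x, p t

/-- `η = I/p`. -/
def etaFun (γ p : ℝ → ℝ) (x : ℝ) : ℝ := Ifun γ p x / p x

/-- `x₀ = sup {x ∈ (a,b) : γ(x) > 0}`. -/
def xZero (a b : EReal) (γ : ℝ → ℝ) : ℝ := sSup {x | x ∈ ooE a b ∧ 0 < γ x}

/-- `E[h(Z)]` for `Z` with density `p`. -/
def meanOf (p h : ℝ → ℝ) : ℝ := ∫ x, h x * p x

/-- The standard solution `g_h` of the Stein equation `η g' + γ g = h - E[h(Z)]`. -/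
def gsol (γ p h : ℝ → ℝ) (x : ℝ) : ℝ :=
  (∫ t in Iic x, (h t - meanOf p h) * p t) / (p x * etaFun γ p x)

/-- The derivative of the standard solution, defined everywhere via the Stein equation. -/
def gsol' (γ p h : ℝ → ℝ) (x : ℝ) : ℝ :=
  (h x - meanOf p h - γ x * gsol γ p h x) / etaFun γ p x



private lemma key_cont (g : ℝ → ℝ) (hg : Continuous g) (x y c : ℝ) :
    ∫ t in x..y, g t * Real.exp (c + ∫ s in x..t, g s) =
      Real.exp (c + ∫ s in x..y, g s) - Real.exp c := by
  have hprim : Continuous fun r => ∫ s in x..r, g s :=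
    intervalIntegral.continuous_primitive (fun a b => hg.intervalIntegrable a b) x
  have hd : ∀ t : ℝ, HasDerivAt (fun r => Real.exp (c + ∫ s in x..r, g s))
      (g t * Real.exp (c + ∫ s in x..t, g s)) t := by
    intro t
    have h1 : HasDerivAt (fun r => ∫ s in x..r, g s) (g t) t :=
      intervalIntegral.integral_hasDerivAt_right (hg.intervalIntegrable x t)
        (hg.stronglyMeasurableAtFilter _ _) hg.continuousAt
    have h2 : HasDerivAt (fun r => c + ∫ s in x..r, g s) (g t) t := h1.const_add c
    simpa [mul_comm] using h2.exp
  have := intervalIntegral.integral_eq_sub_of_hasDerivAt (a := x) (b := y)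
    (f := fun r => Real.exp (c + ∫ s in x..r, g s))
    (f' := fun t => g t * Real.exp (c + ∫ s in x..t, g s))
    (fun t _ => hd t)
    (by
      apply Continuous.intervalIntegrable
      exact hg.mul (Real.continuous_exp.comp (continuous_const.add hprim)))
  rw [this]
  simp

private lemma key_global (F : ℝ → ℝ) (hF : Integrable F) (x y c : ℝ) (hxy : x ≤ y) :
    ∫ t in x..y, F t * Real.exp (c + ∫ s in x..t, F s) =
      Real.exp (c + ∫ s in x..y, F s) - Real.exp c := by
  set A : ℝ := ∫ z, ‖F z‖ with hA
  have hA0 : 0 ≤ A := integral_nonneg fun z => norm_nonneg _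
  set L : ℝ := (∫ t in x..y, F t * Real.exp (c + ∫ s in x..t, F s)) -
      (Real.exp (c + ∫ s in x..y, F s) - Real.exp c) with hL
  set B : ℝ := Real.exp (c + A + 1) with hB
  have hB0 : 0 < B := Real.exp_pos _
  set C : ℝ := 3 * B + 2 * B * (A + 1) with hC
  have hC0 : 0 ≤ C := by positivity
  have hmain : ∀ ε : ℝ, 0 < ε → ε ≤ 1 → |L| ≤ C * ε := by
    intro ε hε hε1
    obtain ⟨g, -, hFg, hgc, hgi⟩ := hF.exists_hasCompactSupport_integral_sub_le hε
    -- basic facts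
    have hFg' : ∀ t : ℝ, x ≤ t → |(∫ s in x..t, F s) - ∫ s in x..t, g s| ≤ ε := by
      intro t hxt
      rw [← intervalIntegral.integral_sub hF.intervalIntegrable hgi.intervalIntegrable]
      calc |∫ s in x..t, F s - g s| ≤ ∫ s in x..t, ‖F s - g s‖ := by
            simpa [Real.norm_eq_abs] using
              intervalIntegral.norm_integral_le_integral_norm (f := fun s => F s - g s) hxt
        _ ≤ ∫ s, ‖F s - g s‖ := by
            rw [intervalIntegral.integral_of_le hxt]
            exact setIntegral_le_integral (hF.sub hgi).norm
              (Eventually.of_forall fun z => norm_nonneg _)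
        _ ≤ ε := hFg
    have hPF : ∀ t : ℝ, c + (∫ s in x..t, F s) ≤ c + A := by
      intro t
      have : |∫ s in x..t, F s| ≤ A := by
        calc |∫ s in x..t, F s| ≤ ∫ s in uIoc x t, ‖F s‖ := by
              simpa [Real.norm_eq_abs] using
                intervalIntegral.norm_integral_le_integral_norm_uIoc (f := F) (a := x) (b := t)
          _ ≤ ∫ s, ‖F s‖ := setIntegral_le_integral hF.norm
              (Eventually.of_forall fun z => norm_nonneg _)
      linarith [abs_le.mp this]
    have hexpF : ∀ t : ℝ, Real.exp (c + ∫ s in x..t, F s) ≤ B := by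
      intro t; exact Real.exp_le_exp.2 (by linarith [hPF t])
    have hexpdiff : ∀ t : ℝ, x ≤ t →
        |Real.exp (c + ∫ s in x..t, F s) - Real.exp (c + ∫ s in x..t, g s)| ≤ 2 * B * ε := by
      intro t hxt
      set w : ℝ := (∫ s in x..t, g s) - ∫ s in x..t, F s with hw
      have hwle : |w| ≤ ε := by rw [hw, abs_sub_comm]; exact hFg' t hxt
      have : Real.exp (c + ∫ s in x..t, g s) =
          Real.exp (c + ∫ s in x..t, F s) * Real.exp w := by
        rw [← Real.exp_add, hw]; congr 1; ring
      rw [this]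
      have h1 : |Real.exp (c + ∫ s in x..t, F s) - Real.exp (c + ∫ s in x..t, F s) * Real.exp w|
          = Real.exp (c + ∫ s in x..t, F s) * |Real.exp w - 1| := by
        rw [show Real.exp (c + ∫ s in x..t, F s) - Real.exp (c + ∫ s in x..t, F s) * Real.exp w
            = Real.exp (c + ∫ s in x..t, F s) * (1 - Real.exp w) by ring, abs_mul,
          abs_of_pos (Real.exp_pos _), abs_sub_comm]
      rw [h1]
      have h2 : |Real.exp w - 1| ≤ 2 * |w| := Real.abs_exp_sub_one_le (hwle.trans hε1)
      calc Real.exp (c + ∫ s in x..t, F s) * |Real.exp w - 1| ≤ B * (2 * |w|) :=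
            mul_le_mul (hexpF t) h2 (abs_nonneg _) hB0.le
        _ ≤ B * (2 * ε) := by nlinarith [hwle]
        _ = 2 * B * ε := by ring
    set EF : ℝ → ℝ := fun t => Real.exp (c + ∫ s in x..t, F s) with hEF
    set Eg : ℝ → ℝ := fun t => Real.exp (c + ∫ s in x..t, g s) with hEg
    have hEFc : Continuous EF := Real.continuous_exp.comp (continuous_const.add
      (intervalIntegral.continuous_primitive (fun a b => hF.intervalIntegrable) x))
    have hEgc : Continuous Eg := Real.continuous_exp.comp (continuous_const.add
      (intervalIntegral.continuous_primitive (fun a b => hgi.intervalIntegrable) x))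
    have hIF : IntervalIntegrable (fun t => F t * EF t) volume x y :=
      hF.intervalIntegrable.mul_continuousOn hEFc.continuousOn
    have hIg : IntervalIntegrable (fun t => g t * Eg t) volume x y :=
      hgi.intervalIntegrable.mul_continuousOn hEgc.continuousOn
    have hgid : ∫ t in x..y, g t * Eg t = Eg y - Real.exp c := key_cont g hgc x y c
    have hsplit : L = (∫ t in x..y, (F t * EF t - g t * Eg t)) + (Eg y - EF y) := by
      rw [hL, intervalIntegral.integral_sub hIF hIg, hgid]; ring
    have hDint : IntervalIntegrable (fun t => |F t - g t|) volume x y := by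
      simpa [Real.norm_eq_abs] using ((hF.sub hgi).norm).intervalIntegrable (a := x) (b := y)
    have hFabs : IntervalIntegrable (fun t => |F t|) volume x y := by
      simpa [Real.norm_eq_abs] using hF.norm.intervalIntegrable (a := x) (b := y)
    have hgabs : IntervalIntegrable (fun t => |g t|) volume x y := by
      simpa [Real.norm_eq_abs] using hgi.norm.intervalIntegrable (a := x) (b := y)
    have hintFg : ∫ t in x..y, |F t - g t| ≤ ε := by
      calc ∫ t in x..y, |F t - g t| ≤ ∫ t, ‖F t - g t‖ := by
            rw [intervalIntegral.integral_of_le hxy]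
            simpa [Real.norm_eq_abs] using setIntegral_le_integral (hF.sub hgi).norm
              (Eventually.of_forall fun z => norm_nonneg _)
        _ ≤ ε := hFg
    have hintg : ∫ t in x..y, |g t| ≤ A + 1 := by
      have h1 : ∫ t in x..y, |F t| ≤ A := by
        rw [intervalIntegral.integral_of_le hxy]
        simpa [Real.norm_eq_abs, hA] using setIntegral_le_integral hF.norm
          (Eventually.of_forall fun z => norm_nonneg _)
      have h2 : ∀ t, |g t| ≤ |F t| + |F t - g t| := by
        intro t
        calc |g t| = |F t - (F t - g t)| := by ring_nf
          _ ≤ |F t| + |F t - g t| := abs_sub _ _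
      have h3 : ∫ t in x..y, |g t| ≤ ∫ t in x..y, (|F t| + |F t - g t|) :=
        intervalIntegral.integral_mono_on hxy hgabs (hFabs.add hDint) (fun t _ => h2 t)
      rw [intervalIntegral.integral_add hFabs hDint] at h3
      linarith
    have hptwise : ∀ t ∈ Icc x y,
        |F t * EF t - g t * Eg t| ≤ |F t - g t| * B + |g t| * (2 * B * ε) := by
      intro t ht
      have h1 : F t * EF t - g t * Eg t = (F t - g t) * EF t + g t * (EF t - Eg t) := by ring
      have h2 : |EF t - Eg t| ≤ 2 * B * ε := hexpdiff t ht.1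
      have h3 : |EF t| ≤ B := by rw [abs_of_pos (Real.exp_pos _)]; exact hexpF t
      calc |F t * EF t - g t * Eg t| ≤ |(F t - g t) * EF t| + |g t * (EF t - Eg t)| := by
            rw [h1]; exact abs_add_le _ _
        _ ≤ |F t - g t| * B + |g t| * (2 * B * ε) := by
            rw [abs_mul, abs_mul]
            exact add_le_add (mul_le_mul_of_nonneg_left h3 (abs_nonneg _))
              (mul_le_mul_of_nonneg_left h2 (abs_nonneg _))
    have hterm1 : |∫ t in x..y, (F t * EF t - g t * Eg t)| ≤ B * ε + (A + 1) * (2 * B * ε) := by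
      have h0 : |∫ t in x..y, (F t * EF t - g t * Eg t)| ≤
          ∫ t in x..y, |F t * EF t - g t * Eg t| := by
        simpa [Real.norm_eq_abs] using
          intervalIntegral.norm_integral_le_integral_norm
            (f := fun t => F t * EF t - g t * Eg t) hxy
      have h1 : ∫ t in x..y, |F t * EF t - g t * Eg t| ≤
          ∫ t in x..y, (|F t - g t| * B + |g t| * (2 * B * ε)) := by
        have hnrm : IntervalIntegrable (fun t => |F t * EF t - g t * Eg t|) volume x y := by
          simpa [Real.norm_eq_abs] using (hIF.sub hIg).norm
        exact intervalIntegral.integral_mono_on hxy hnrm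
          ((hDint.mul_const B).add (hgabs.mul_const (2 * B * ε))) hptwise
      rw [intervalIntegral.integral_add (hDint.mul_const B)
        (hgabs.mul_const (2 * B * ε)),
        intervalIntegral.integral_mul_const, intervalIntegral.integral_mul_const] at h1
      have := h0.trans h1
      have hm1 : (∫ t in x..y, |F t - g t|) * B ≤ ε * B :=
        mul_le_mul_of_nonneg_right hintFg hB0.le
      have hm2 : (∫ t in x..y, |g t|) * (2 * B * ε) ≤ (A + 1) * (2 * B * ε) :=
        mul_le_mul_of_nonneg_right hintg (by positivity)
      nlinarith
    have hterm2 : |Eg y - EF y| ≤ 2 * B * ε := by rw [abs_sub_comm]; exact hexpdiff y hxy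
    calc |L| ≤ |∫ t in x..y, (F t * EF t - g t * Eg t)| + |Eg y - EF y| := by
          rw [hsplit]; exact abs_add_le _ _
      _ ≤ (B * ε + (A + 1) * (2 * B * ε)) + 2 * B * ε := add_le_add hterm1 hterm2
      _ = C * ε := by rw [hC]; ring
  -- conclude L = 0
  have hL0 : L = 0 := by
    by_contra h
    have habs : 0 < |L| := abs_pos.2 h
    rcases le_or_gt (|L|) C with hc | hc
    · have := hmain (|L| / (2 * (C + 1))) (by positivity)
        (by rw [div_le_one (by positivity)]; nlinarith)
      have hlt : C * (|L| / (2 * (C + 1))) < |L| := by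
        rw [div_eq_inv_mul, ← mul_assoc]
        have : C * (2 * (C + 1))⁻¹ < 1 := by
          rw [mul_inv_lt_iff₀ (by positivity)]; nlinarith
        nlinarith
      linarith
    · have := hmain 1 one_pos le_rfl
      simp at this; linarith
  have := sub_eq_zero.mp hL0
  linarith [this]



lemma key_interval (f Q : ℝ → ℝ) (x y : ℝ) (hxy : x ≤ y)
    (hf : IntervalIntegrable f volume x y)
    (hQ : ∀ t ∈ Icc x y, Q t = Q x + ∫ s in x..t, f s) :
    ∫ t in x..y, f t * Real.exp (Q t) = Real.exp (Q y) - Real.exp (Q x) := by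
  set F : ℝ → ℝ := Set.indicator (Icc x y) f with hF
  have hFint : Integrable F := by
    rw [hF, integrable_indicator_iff measurableSet_Icc]
    exact (intervalIntegrable_iff_integrableOn_Icc_of_le hxy).1 hf
  have hinner : ∀ t ∈ Icc x y, (∫ s in x..t, F s) = ∫ s in x..t, f s := by
    intro t ht
    apply intervalIntegral.integral_congr
    intro s hs
    rw [uIcc_of_le ht.1] at hs
    exact Set.indicator_of_mem (mem_Icc.mpr ⟨hs.1, hs.2.trans ht.2⟩) f
  have hmain := key_global F hFint x y (Q x) hxy
  have hcong : ∫ t in x..y, F t * Real.exp (Q x + ∫ s in x..t, F s)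
      = ∫ t in x..y, f t * Real.exp (Q t) := by
    apply intervalIntegral.integral_congr
    intro t ht
    rw [uIcc_of_le hxy] at ht
    show F t * Real.exp (Q x + ∫ s in x..t, F s) = f t * Real.exp (Q t)
    rw [hinner t ht, hF, Set.indicator_of_mem ht f, ← hQ t ht]
  rw [hcong, hinner y (mem_Icc.mpr ⟨hxy, le_rfl⟩),
    ← hQ y (mem_Icc.mpr ⟨hxy, le_rfl⟩)] at hmain
  exact hmain


lemma contOn_of_locAC {s : Set ℝ} (hso : IsOpen s) (F f : ℝ → ℝ)
    (h : ∀ x ∈ s, ∀ y ∈ s, IntervalIntegrable f volume x y ∧ F y - F x = ∫ t in x..y, f t) :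
    ContinuousOn F s := by
  intro z hz
  obtain ⟨ε, hε, hball⟩ := Metric.isOpen_iff.1 hso z hz
  rw [Real.ball_eq_Ioo] at hball
  set u := z - ε / 2 with hu
  set v := z + ε / 2 with hv
  have huv : ∀ t, u ≤ t → t ≤ v → t ∈ s := fun t h1 h2 =>
    hball ⟨by simp [hu] at h1 ⊢; linarith, by simp [hv] at h2 ⊢; linarith⟩
  have hus : u ∈ s := huv u le_rfl (by simp [hu, hv]; linarith)
  have hvs : v ∈ s := huv v (by simp [hu, hv]; linarith) le_rfl
  have huvle : u ≤ v := by simp [hu, hv]; linarith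
  have hint : IntegrableOn f (uIcc u v) := by
    rw [uIcc_of_le huvle]
    exact (intervalIntegrable_iff_integrableOn_Icc_of_le huvle).1 (h u hus v hvs).1
  have hcont : ContinuousOn (fun y => F u + ∫ t in u..y, f t) (uIcc u v) :=
    (continuousOn_const.add (intervalIntegral.continuousOn_primitive_interval hint))
  have heq : EqOn F (fun y => F u + ∫ t in u..y, f t) (uIcc u v) := by
    intro t ht
    rw [uIcc_of_le huvle] at ht
    have := (h u hus t (huv t ht.1 ht.2)).2
    simp only; linarith
  have : ContinuousOn F (uIcc u v) := hcont.congr heq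
  have hmem : uIcc u v ∈ 𝓝 z := by
    rw [uIcc_of_le huvle]
    exact Icc_mem_nhds (by simp [hu]; linarith) (by simp [hv]; linarith)
  exact (this.continuousAt hmem).continuousWithinAt

lemma seq_to_left_end {a b : EReal} {x : ℝ} (hx : a < (x : EReal)) (hxb : (x : EReal) < b) :
    ∃ w : ℕ → ℝ, (∀ n, a < (w n : EReal) ∧ (w n : EReal) < b) ∧ (∀ n, w n ≤ x) ∧
      Antitone w ∧ Tendsto (fun n => (w n : EReal)) atTop (𝓝[>] a) := by
  induction a using EReal.rec with
  | bot =>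
    refine ⟨fun n => x - n, fun n => ⟨EReal.bot_lt_coe _, ?_⟩, fun n => by simp, ?_, ?_⟩
    · exact lt_of_le_of_lt (EReal.coe_le_coe_iff.2 (by simp)) hxb
    · intro m n hmn
      have : (m : ℝ) ≤ (n : ℝ) := by exact_mod_cast hmn
      simp only; linarith
    · rw [tendsto_nhdsWithin_iff]
      constructor
      · rw [EReal.tendsto_nhds_bot_iff_real]
        intro r
        have : Tendsto (fun n : ℕ => x - (n : ℝ)) atTop atBot :=
          tendsto_atBot_add_const_left _ x
            (tendsto_neg_atBot_iff.2 tendsto_natCast_atTop_atTop)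
        filter_upwards [this.eventually_lt_atBot r] with n hn
        exact_mod_cast EReal.coe_lt_coe_iff.2 hn
      · exact Eventually.of_forall fun n => EReal.bot_lt_coe _
  | coe a₀ =>
    have hax : a₀ < x := EReal.coe_lt_coe_iff.1 hx
    refine ⟨fun n => a₀ + (x - a₀) / (n + 1), fun n => ⟨?_, ?_⟩, fun n => ?_, ?_, ?_⟩
    · refine EReal.coe_lt_coe_iff.2 ?_
      have : 0 < (x - a₀) / ((n : ℝ) + 1) := div_pos (by linarith) (by positivity)
      linarith
    · refine lt_of_le_of_lt (EReal.coe_le_coe_iff.2 ?_) hxb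
      have h1 : (x - a₀) / ((n : ℝ) + 1) ≤ (x - a₀) / 1 := by
        apply div_le_div_of_nonneg_left (by linarith) one_pos (by norm_num)
      linarith [h1]
    · have h1 : (x - a₀) / ((n : ℝ) + 1) ≤ (x - a₀) / 1 := by
        apply div_le_div_of_nonneg_left (by linarith) one_pos (by norm_num)
      linarith [h1]
    · intro m n hmn
      simp only
      have : (x - a₀) / ((n : ℝ) + 1) ≤ (x - a₀) / ((m : ℝ) + 1) := by
        apply div_le_div_of_nonneg_left (by linarith) (by positivity)
        have : (m : ℝ) ≤ (n : ℝ) := by exact_mod_cast hmn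
        linarith
      linarith
    · rw [tendsto_nhdsWithin_iff]
      constructor
      · have h0 : Tendsto (fun n : ℕ => a₀ + (x - a₀) / (n + 1)) atTop (𝓝 a₀) := by
          have h1 := tendsto_one_div_add_atTop_nhds_zero_nat.const_mul (x - a₀)
          rw [mul_zero] at h1
          have h2 : Tendsto (fun n : ℕ => a₀ + (x - a₀) * (1 / ((n : ℝ) + 1))) atTop (𝓝 (a₀ + 0)) :=
            tendsto_const_nhds.add h1
          rw [add_zero] at h2
          convert h2 using 2 with n
          ring
        exact (continuous_coe_real_ereal.tendsto a₀).comp h0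
      · refine Eventually.of_forall fun n => ?_
        refine EReal.coe_lt_coe_iff.2 ?_
        have : 0 < (x - a₀) / ((n : ℝ) + 1) := div_pos (by linarith) (by positivity)
        simp only [mem_Ioi]; linarith
  | top => exact absurd hx (by simp)



lemma seq_to_right_end {a b : EReal} {x : ℝ} (hx : a < (x : EReal)) (hxb : (x : EReal) < b) :
    ∃ w : ℕ → ℝ, (∀ n, a < (w n : EReal) ∧ (w n : EReal) < b) ∧ (∀ n, x ≤ w n) ∧
      Monotone w ∧ Tendsto (fun n => (w n : EReal)) atTop (𝓝[<] b) := by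
  induction b using EReal.rec with
  | bot => exact absurd hxb (by simp)
  | coe b₀ =>
    have hxb' : x < b₀ := EReal.coe_lt_coe_iff.1 hxb
    refine ⟨fun n => b₀ - (b₀ - x) / (n + 1), fun n => ⟨?_, ?_⟩, fun n => ?_, ?_, ?_⟩
    · refine lt_of_lt_of_le hx (EReal.coe_le_coe_iff.2 ?_)
      have h1 : (b₀ - x) / ((n : ℝ) + 1) ≤ (b₀ - x) / 1 := by
        apply div_le_div_of_nonneg_left (by linarith) one_pos (by norm_num)
      linarith [h1]
    · refine EReal.coe_lt_coe_iff.2 ?_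
      have : 0 < (b₀ - x) / ((n : ℝ) + 1) := div_pos (by linarith) (by positivity)
      linarith
    · have h1 : (b₀ - x) / ((n : ℝ) + 1) ≤ (b₀ - x) / 1 := by
        apply div_le_div_of_nonneg_left (by linarith) one_pos (by norm_num)
      linarith [h1]
    · intro m n hmn
      simp only
      have : (b₀ - x) / ((n : ℝ) + 1) ≤ (b₀ - x) / ((m : ℝ) + 1) := by
        apply div_le_div_of_nonneg_left (by linarith) (by positivity)
        have : (m : ℝ) ≤ (n : ℝ) := by exact_mod_cast hmn
        linarith
      linarith
    · rw [tendsto_nhdsWithin_iff]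
      constructor
      · have h0 : Tendsto (fun n : ℕ => b₀ - (b₀ - x) / (n + 1)) atTop (𝓝 b₀) := by
          have h1 := tendsto_one_div_add_atTop_nhds_zero_nat.const_mul (b₀ - x)
          rw [mul_zero] at h1
          have h2 : Tendsto (fun n : ℕ => b₀ - (b₀ - x) * (1 / ((n : ℝ) + 1))) atTop
              (𝓝 (b₀ - 0)) := tendsto_const_nhds.sub h1
          rw [sub_zero] at h2
          convert h2 using 2 with n
          ring
        exact (continuous_coe_real_ereal.tendsto b₀).comp h0
      · refine Eventually.of_forall fun n => ?_
        refine EReal.coe_lt_coe_iff.2 ?_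
        have : 0 < (b₀ - x) / ((n : ℝ) + 1) := div_pos (by linarith) (by positivity)
        simp only [mem_Iio]; linarith
  | top =>
    refine ⟨fun n => x + n, fun n => ⟨?_, EReal.coe_lt_top _⟩, fun n => by simp, ?_, ?_⟩
    · exact lt_of_lt_of_le hx (EReal.coe_le_coe_iff.2 (by simp))
    · intro m n hmn
      have : (m : ℝ) ≤ (n : ℝ) := by exact_mod_cast hmn
      simp only; linarith
    · rw [tendsto_nhdsWithin_iff]
      constructor
      · rw [EReal.tendsto_nhds_top_iff_real]
        intro r
        have : Tendsto (fun n : ℕ => x + (n : ℝ)) atTop atTop :=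
          tendsto_atTop_add_const_left _ x tendsto_natCast_atTop_atTop
        filter_upwards [this.eventually_gt_atTop r] with n hn
        exact_mod_cast EReal.coe_lt_coe_iff.2 hn
      · exact Eventually.of_forall fun n => EReal.coe_lt_top _

/-- Under Condition 4, the density `p = (K/η) exp(Q)` built from the coefficients `γ` and
`η` satisfies `E[γ(Z)] = 0` and `η(x) = (1/p(x)) ∫_a^x γ(t) p(t) dt` on `(a,b)`. -/
theorem thm_eta_gamma_density (a b : EReal) (γ η : ℝ → ℝ)
    (hab : a < b)
    (hanti : AntitoneOn γ (ccE a b))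
    (hposγ : ∃ x ∈ ooE a b, 0 < γ x)
    (hnegγ : ∃ x ∈ ooE a b, γ x < 0)
    (hηpos : ∀ x ∈ ooE a b, 0 < η x)
    (hηAC : LocACOn η (ooE a b))
    (hlocint : ∀ x ∈ ooE a b, ∀ y ∈ ooE a b,
      IntervalIntegrable (fun t => γ t / η t) volume x y)
    (Q : ℝ → ℝ) (hQ : Q = fun x => ∫ t in (xZero a b γ)..x, γ t / η t)
    (hQa : Tendsto Q (nhdsGT a) atBot) (hQb : Tendsto Q (nhdsLT b) atBot)
    (p : ℝ → ℝ)
    (hp : p = Set.indicator (ooE a b)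
        (fun x => (Real.exp (Q x) / η x) / (∫ y in ooE a b, Real.exp (Q y) / η y))) :
    (MeasureTheory.Integrable (fun x => γ x * p x) ∧ ∫ x, γ x * p x = 0) ∧
    ∀ x ∈ ooE a b, η x = (∫ t in Iic x, γ t * p t) / p x := by
  classical
  set s := ooE a b with hsdef
  have hsub : s ⊆ ccE a b := fun t ht => ⟨ht.1.le, ht.2.le⟩
  have hsopen : IsOpen s := by
    have : s = (fun x : ℝ => (x : EReal)) ⁻¹' (Set.Ioo a b) := rfl
    rw [this]; exact isOpen_Ioo.preimage continuous_coe_real_ereal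
  have hsmeas : MeasurableSet s := hsopen.measurableSet
  have hconn : ∀ u ∈ s, ∀ v ∈ s, ∀ t : ℝ, u ≤ t → t ≤ v → t ∈ s := by
    intro u hu v hv t h1 h2
    exact ⟨lt_of_lt_of_le hu.1 (EReal.coe_le_coe_iff.2 h1),
      lt_of_le_of_lt (EReal.coe_le_coe_iff.2 h2) hv.2⟩
  obtain ⟨c, hc, hγc⟩ := hposγ
  obtain ⟨d, hd, hγd⟩ := hnegγ
  have hcd : c < d := by
    by_contra h
    push_neg at h
    have := hanti (hsub hd) (hsub hc) h
    linarith
  -- x₀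
  set x₀ := xZero a b γ with hx₀def
  have hSbdd : ∀ t ∈ {x | x ∈ s ∧ 0 < γ x}, t ≤ d := by
    intro t ht
    by_contra h
    push_neg at h
    have := hanti (hsub hd) (hsub ht.1) h.le
    linarith [ht.2]
  have hcx₀ : c ≤ x₀ := le_csSup ⟨d, hSbdd⟩ ⟨hc, hγc⟩
  have hx₀d : x₀ ≤ d := csSup_le ⟨c, hc, hγc⟩ hSbdd
  have hx₀s : x₀ ∈ s := hconn c hc d hd x₀ hcx₀ hx₀d
  -- f, Q, E, u
  set f : ℝ → ℝ := fun t => γ t / η t with hfdef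
  have hQd : ∀ x ∈ s, ∀ t ∈ s, Q t = Q x + ∫ v in x..t, f v := by
    intro x hx t ht
    have h2 := intervalIntegral.integral_interval_sub_left
      (hlocint x₀ hx₀s t ht) (hlocint x₀ hx₀s x hx)
    rw [hQ]
    simp only
    linarith [h2]
  have hQcont : ContinuousOn Q s :=
    contOn_of_locAC hsopen Q f fun x hx y hy =>
      ⟨hlocint x hx y hy, by rw [hQd x hx y hy]; ring⟩
  have hηcont : ContinuousOn η s := by
    obtain ⟨η', hη'⟩ := hηAC
    exact contOn_of_locAC hsopen η η' hη'
  set E : ℝ → ℝ := fun t => Real.exp (Q t) with hEdef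
  have hEcont : ContinuousOn E s := Real.continuous_exp.comp_continuousOn hQcont
  have hEpos : ∀ t, 0 < E t := fun t => Real.exp_pos _
  set u : ℝ → ℝ := fun t => f t * E t with hudef
  have huIcc : ∀ x ∈ s, ∀ y ∈ s, uIcc x y ⊆ s := by
    intro x hx y hy
    rcases le_total x y with h | h
    · rw [uIcc_of_le h]; exact fun t ht => hconn x hx y hy t ht.1 ht.2
    · rw [uIcc_of_ge h]; exact fun t ht => hconn y hy x hx t ht.1 ht.2
  have hu_int : ∀ x ∈ s, ∀ y ∈ s, IntervalIntegrable u volume x y := fun x hx y hy =>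
    (hlocint x hx y hy).mul_continuousOn (hEcont.mono (huIcc x hx y hy))
  have hFTC : ∀ x ∈ s, ∀ y ∈ s, x ≤ y → ∫ t in x..y, u t = E y - E x := by
    intro x hx y hy hxy
    exact key_interval f Q x y hxy (hlocint x hx y hy)
      (fun t ht => hQd x hx t (hconn x hx y hy t ht.1 ht.2))
  -- left piece
  have leftPiece : ∀ x ∈ s, 0 < γ x →
      IntegrableOn u (s ∩ Iic x) ∧ ∫ t in s ∩ Iic x, u t = E x := by
    intro x hx hγx
    obtain ⟨w, hws, hwx, -, hwtend⟩ := seq_to_left_end hx.1 hx.2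
    have hwmem : ∀ n, w n ∈ s := fun n => ⟨(hws n).1, (hws n).2⟩
    set S := s ∩ Iic x with hSdef
    have hSmeas : MeasurableSet S := hsmeas.inter measurableSet_Iic
    set φ : ℕ → Set ℝ := fun n => Ioc (w n) x with hφdef
    have hφS : ∀ n, φ n ⊆ S := fun n t ht =>
      ⟨hconn (w n) (hwmem n) x hx t ht.1.le ht.2, ht.2⟩
    have hcover : AECover (volume.restrict S) atTop φ := by
      constructor
      · rw [ae_restrict_iff' hSmeas]
        refine ae_of_all _ fun t ht => ?_
        have h1 : ∀ᶠ n in atTop, (w n : EReal) ∈ Iio (t : EReal) :=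
          hwtend.eventually_mem (nhdsWithin_le_nhds (Iio_mem_nhds ht.1.1))
        filter_upwards [h1] with n hn
        exact ⟨EReal.coe_lt_coe_iff.1 hn, ht.2⟩
      · intro n; exact measurableSet_Ioc
    have hres : ∀ n, (volume.restrict S).restrict (φ n) = volume.restrict (φ n) := fun n => by
      rw [Measure.restrict_restrict measurableSet_Ioc, inter_eq_self_of_subset_left (hφS n)]
    have hbase : ∀ n, IntegrableOn u (φ n) := fun n =>
      (intervalIntegrable_iff_integrableOn_Ioc_of_le (hwx n)).1
        (hu_int (w n) (hwmem n) x hx)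
    have hint : ∀ n, IntegrableOn u (φ n) (volume.restrict S) := fun n => by
      rw [IntegrableOn, hres n]; exact hbase n
    have hEw : Tendsto (fun n => E (w n)) atTop (𝓝 0) := by
      have h1 : Tendsto w atTop (nhdsGT a) := by
        rw [_root_.nhdsGT, tendsto_comap_iff]; exact hwtend
      exact Real.tendsto_exp_atBot.comp (hQa.comp h1)
    have hval : ∀ n, ∫ t in φ n, u t ∂(volume.restrict S) = E x - E (w n) := fun n => by
      rw [hres n, ← intervalIntegral.integral_of_le (hwx n)]
      exact hFTC (w n) (hwmem n) x hx (hwx n)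
    have htend : Tendsto (fun n => ∫ t in φ n, u t ∂(volume.restrict S)) atTop (𝓝 (E x)) := by
      simp_rw [hval]
      simpa using tendsto_const_nhds.sub hEw
    have hnonneg : 0 ≤ᵐ[volume.restrict S] u := by
      have hn : ∀ᵐ t ∂(volume.restrict S), 0 ≤ u t := by
        rw [ae_restrict_iff' hSmeas]
        refine ae_of_all _ fun t ht => ?_
        have h1 : γ x ≤ γ t := hanti (hsub ht.1) (hsub hx) ht.2
        have h2 : 0 < η t := hηpos t ht.1
        have : 0 ≤ f t := div_nonneg (by linarith) h2.le
        exact mul_nonneg this (hEpos t).le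
      exact hn.mono fun t h => h
    have hIntS : Integrable u (volume.restrict S) :=
      hcover.integrable_of_integral_tendsto_of_nonneg_ae (E x) hint hnonneg htend
    exact ⟨hIntS, hcover.integral_eq_of_tendsto (E x) hIntS htend⟩
  -- right piece
  have rightPiece : ∀ x ∈ s, γ x < 0 →
      IntegrableOn u (s ∩ Ioi x) ∧ ∫ t in s ∩ Ioi x, u t = -E x := by
    intro x hx hγx
    obtain ⟨w, hws, hwx, -, hwtend⟩ := seq_to_right_end hx.1 hx.2
    have hwmem : ∀ n, w n ∈ s := fun n => ⟨(hws n).1, (hws n).2⟩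
    set S := s ∩ Ioi x with hSdef
    have hSmeas : MeasurableSet S := hsmeas.inter measurableSet_Ioi
    set φ : ℕ → Set ℝ := fun n => Ioc x (w n) with hφdef
    have hφS : ∀ n, φ n ⊆ S := fun n t ht =>
      ⟨hconn x hx (w n) (hwmem n) t ht.1.le ht.2, ht.1⟩
    have hcover : AECover (volume.restrict S) atTop φ := by
      constructor
      · rw [ae_restrict_iff' hSmeas]
        refine ae_of_all _ fun t ht => ?_
        have h1 : ∀ᶠ n in atTop, (w n : EReal) ∈ Ioi (t : EReal) :=
          hwtend.eventually_mem (nhdsWithin_le_nhds (Ioi_mem_nhds ht.1.2))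
        filter_upwards [h1] with n hn
        exact ⟨ht.2, (EReal.coe_lt_coe_iff.1 hn).le⟩
      · intro n; exact measurableSet_Ioc
    have hres : ∀ n, (volume.restrict S).restrict (φ n) = volume.restrict (φ n) := fun n => by
      rw [Measure.restrict_restrict measurableSet_Ioc, inter_eq_self_of_subset_left (hφS n)]
    have hbase : ∀ n, IntegrableOn u (φ n) := fun n =>
      (intervalIntegrable_iff_integrableOn_Ioc_of_le (hwx n)).1
        (hu_int x hx (w n) (hwmem n))
    have hint : ∀ n, IntegrableOn u (φ n) (volume.restrict S) := fun n => by
      rw [IntegrableOn, hres n]; exact hbase n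
    have hEw : Tendsto (fun n => E (w n)) atTop (𝓝 0) := by
      have h1 : Tendsto w atTop (nhdsLT b) := by
        rw [_root_.nhdsLT, tendsto_comap_iff]; exact hwtend
      exact Real.tendsto_exp_atBot.comp (hQb.comp h1)
    have hupos : ∀ t ∈ S, u t ≤ 0 := by
      intro t ht
      have h1 : γ t ≤ γ x := hanti (hsub hx) (hsub ht.1) ht.2.le
      have h2 : 0 < η t := hηpos t ht.1
      have : f t ≤ 0 := div_nonpos_of_nonpos_of_nonneg (by linarith) h2.le
      exact mul_nonpos_of_nonpos_of_nonneg this (hEpos t).le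
    have hval : ∀ n, ∫ t in φ n, u t ∂(volume.restrict S) = E (w n) - E x := fun n => by
      rw [hres n, ← intervalIntegral.integral_of_le (hwx n)]
      exact hFTC x hx (w n) (hwmem n) (hwx n)
    have hvalnorm : ∀ n, ∫ t in φ n, ‖u t‖ ∂(volume.restrict S) = E x - E (w n) := fun n => by
      rw [hres n]
      have : ∫ t in φ n, ‖u t‖ = ∫ t in φ n, (-u t) := by
        refine setIntegral_congr_fun measurableSet_Ioc fun t ht => ?_
        rw [Real.norm_eq_abs, abs_of_nonpos (hupos t (hφS n ht))]
      rw [this, integral_neg, ← intervalIntegral.integral_of_le (hwx n),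
        hFTC x hx (w n) (hwmem n) (hwx n)]
      ring
    have htendnorm : Tendsto (fun n => ∫ t in φ n, ‖u t‖ ∂(volume.restrict S)) atTop
        (𝓝 (E x)) := by
      simp_rw [hvalnorm]
      simpa using tendsto_const_nhds.sub hEw
    have hIntS : Integrable u (volume.restrict S) :=
      hcover.integrable_of_integral_norm_tendsto (E x) hint htendnorm
    have htend : Tendsto (fun n => ∫ t in φ n, u t ∂(volume.restrict S)) atTop (𝓝 (-E x)) := by
      simp_rw [hval]
      simpa using hEw.sub tendsto_const_nhds
    exact ⟨hIntS, hcover.integral_eq_of_tendsto (-E x) hIntS htend⟩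
  -- split of s ∩ Iic x
  have hsplitIic : ∀ z ∈ s, 0 < γ z → ∀ x ∈ s, z ≤ x →
      IntegrableOn u (s ∩ Iic x) ∧ ∫ t in s ∩ Iic x, u t = E x := by
    intro z hz hγz x hx hzx
    obtain ⟨hL1, hL2⟩ := leftPiece z hz hγz
    have hseteq : s ∩ Iic x = (s ∩ Iic z) ∪ Ioc z x := by
      ext t
      constructor
      · rintro ⟨hts, htx⟩
        rcases le_or_gt t z with h | h
        · exact Or.inl ⟨hts, h⟩
        · exact Or.inr ⟨h, htx⟩
      · rintro (⟨hts, htz⟩ | ⟨h1t, h2t⟩)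
        · exact ⟨hts, htz.trans hzx⟩
        · exact ⟨hconn z hz x hx t h1t.le h2t, h2t⟩
    have hdisj : Disjoint (s ∩ Iic z) (Ioc z x) :=
      Set.disjoint_left.2 fun t ht h2 => absurd h2.1 (not_lt.2 ht.2)
    have hIoc_int : IntegrableOn u (Ioc z x) :=
      (intervalIntegrable_iff_integrableOn_Ioc_of_le hzx).1 (hu_int z hz x hx)
    constructor
    · rw [hseteq]; exact hL1.union hIoc_int
    · rw [hseteq, setIntegral_union hdisj measurableSet_Ioc hL1 hIoc_int, hL2,
        ← intervalIntegral.integral_of_le hzx, hFTC z hz x hx hzx]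
      ring
  -- integrability and total integral of u on s
  have hsu : s = (s ∩ Iic d) ∪ (s ∩ Ioi d) := by
    rw [← inter_union_distrib_left, Iic_union_Ioi, inter_univ]
  have hdisj2 : Disjoint (s ∩ Iic d) (s ∩ Ioi d) :=
    Set.disjoint_left.2 fun t ht h2 => (not_lt.2 ht.2) (mem_Ioi.1 h2.2)
  obtain ⟨hintL, hvalL⟩ := hsplitIic c hc hγc d hd hcd.le
  obtain ⟨hintR, hvalR⟩ := rightPiece d hd hγd
  have hIsu : IntegrableOn u s := by
    rw [hsu]; exact hintL.union hintR
  have hIs0 : ∫ t in s, u t = 0 := by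
    rw [hsu, setIntegral_union hdisj2 (hsmeas.inter measurableSet_Ioi) hintL hintR,
      hvalL, hvalR]
    ring
  -- the normalizing constant
  set K := ∫ y in s, Real.exp (Q y) / η y with hKdef
  set g0 : ℝ → ℝ := fun t => E t / η t with hg0def
  have hg0cont : ContinuousOn g0 s :=
    hEcont.div hηcont fun t ht => (hηpos t ht).ne'
  have hg0nonneg : ∀ t ∈ s, 0 ≤ g0 t := fun t ht =>
    div_nonneg (hEpos t).le (hηpos t ht).le
  have hu_eq : ∀ t, u t = γ t * g0 t := by
    intro t
    show γ t / η t * Real.exp (Q t) = γ t * (Real.exp (Q t) / η t)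
    ring
  have hg0int : IntegrableOn g0 s := by
    have hp1 : IntegrableOn g0 (s ∩ Iic c) := by
      refine Integrable.mono' ((leftPiece c hc hγc).1.div_const (γ c))
        ((hg0cont.mono inter_subset_left).aestronglyMeasurable
          (hsmeas.inter measurableSet_Iic)) ?_
      rw [ae_restrict_iff' (hsmeas.inter measurableSet_Iic)]
      refine ae_of_all _ fun t ht => ?_
      rw [Real.norm_eq_abs, abs_of_nonneg (hg0nonneg t ht.1)]
      rw [le_div_iff₀ hγc]
      have h1 : γ c ≤ γ t := hanti (hsub ht.1) (hsub hc) ht.2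
      have := hu_eq t
      nlinarith [hg0nonneg t ht.1]
    have hp2 : IntegrableOn g0 (Icc c d) :=
      (hg0cont.mono fun t ht => hconn c hc d hd t ht.1 ht.2).integrableOn_Icc
    have hp3 : IntegrableOn g0 (s ∩ Ioi d) := by
      refine Integrable.mono' ((rightPiece d hd hγd).1.div_const (γ d))
        ((hg0cont.mono inter_subset_left).aestronglyMeasurable
          (hsmeas.inter measurableSet_Ioi)) ?_
      rw [ae_restrict_iff' (hsmeas.inter measurableSet_Ioi)]
      refine ae_of_all _ fun t ht => ?_
      rw [Real.norm_eq_abs, abs_of_nonneg (hg0nonneg t ht.1)]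
      rw [le_div_iff_of_neg hγd]
      have h1 : γ t ≤ γ d := hanti (hsub hd) (hsub ht.1) ht.2.le
      have := hu_eq t
      nlinarith [hg0nonneg t ht.1]
    have hcup : s ⊆ (s ∩ Iic c) ∪ (Icc c d ∪ (s ∩ Ioi d)) := by
      intro t ht
      rcases le_or_gt t c with h | h
      · exact Or.inl ⟨ht, h⟩
      · rcases le_or_gt t d with h' | h'
        · exact Or.inr (Or.inl ⟨h.le, h'⟩)
        · exact Or.inr (Or.inr ⟨ht, h'⟩)
    exact (hp1.union (hp2.union hp3)).mono_set hcup
  have hKg0 : K = ∫ t in s, g0 t := rfl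
  have hKpos : 0 < K := by
    have h1 : ∫ t in Icc c d, g0 t ≤ K := by
      rw [hKg0]
      refine setIntegral_mono_set hg0int ?_ ?_
      · have hn : ∀ᵐ t ∂(volume.restrict s), 0 ≤ g0 t := by
          rw [ae_restrict_iff' hsmeas]
          exact ae_of_all _ fun t ht => hg0nonneg t ht
        exact hn.mono fun t h => h
      · exact HasSubset.Subset.eventuallyLE fun t ht => hconn c hc d hd t ht.1 ht.2
    have h2 : 0 < ∫ t in Icc c d, g0 t := by
      rw [MeasureTheory.integral_Icc_eq_integral_Ioc, ← intervalIntegral.integral_of_le hcd.le]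
      refine intervalIntegral.intervalIntegral_pos_of_pos_on ?_ ?_ hcd
      · exact ContinuousOn.intervalIntegrable (by
          rw [uIcc_of_le hcd.le]
          exact hg0cont.mono fun t ht => hconn c hc d hd t ht.1 ht.2)
      · intro t ht
        have hts : t ∈ s := hconn c hc d hd t ht.1.le ht.2.le
        exact div_pos (hEpos t) (hηpos t hts)
    linarith
  -- relating γ * p to u
  have hγp : (fun t => γ t * p t) = Set.indicator s (fun t => u t / K) := by
    funext t
    by_cases ht : t ∈ s
    · rw [hp, Set.indicator_of_mem ht, Set.indicator_of_mem ht, hu_eq t]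
      show γ t * (Real.exp (Q t) / η t / K) = γ t * (Real.exp (Q t) / η t) / K
      ring
    · rw [hp, Set.indicator_of_notMem ht, Set.indicator_of_notMem ht, mul_zero]
  have hint_γp : Integrable (fun x => γ x * p x) := by
    rw [hγp]
    exact (integrable_indicator_iff hsmeas).2 (hIsu.div_const K)
  have hzero_γp : ∫ x, γ x * p x = 0 := by
    rw [hγp, integral_indicator hsmeas]
    simp_rw [div_eq_mul_inv]
    rw [integral_mul_const, hIs0, zero_mul]
  refine ⟨⟨hint_γp, hzero_γp⟩, ?_⟩
  -- second conclusion
  intro x hx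
  have hIx : ∫ t in s ∩ Iic x, u t = E x := by
    rcases le_total c x with h | h
    · exact (hsplitIic c hc hγc x hx h).2
    · have hγx : 0 < γ x := lt_of_lt_of_le hγc (hanti (hsub hx) (hsub hc) h)
      exact (hsplitIic x hx hγx x hx le_rfl).2
  have hIic : ∫ t in Iic x, γ t * p t = E x / K := by
    rw [hγp, setIntegral_indicator hsmeas, inter_comm]
    simp_rw [div_eq_mul_inv]
    rw [integral_mul_const, hIx]
  rw [hIic, hp, Set.indicator_of_mem hx]
  have h1 : η x ≠ 0 := (hηpos x hx).ne'
  have h2 : Real.exp (Q x) ≠ 0 := (Real.exp_pos _).ne'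
  have h3 : K ≠ 0 := hKpos.ne'
  show η x = E x / K / (Real.exp (Q x) / η x / K)
  rw [hEdef]
  field_simp

end
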